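/- arXiv:quant-ph/0311039 — 2 statements merged into one kernel-verified Lean document; each statement's English description precedes it below -/
import Mathlib

section
/- Let M be an N×N complex matrix and I_N the N×N identity matrix. Then the squared Frobenius norm ‖M − I_N‖₂² is at least N − rank(M). -/
open scoped ComplexOrder

local notation "⟪" x ", " y "⟫" => @inner ℂ _ _ x y

private lemma parseval {E : Type*} [NormedAddCommGroup E] [InnerProductSpace ℂ E]
    {ι : Type*} [Fintype ι] (b : OrthonormalBasis ι ℂ E) (x : E) :
    ‖x‖ ^ 2 = ∑ i, ‖⟪b i, x⟫‖ ^ 2 := by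
  have h := b.repr.norm_map x
  rw [← h, EuclideanSpace.norm_eq, Real.sq_sqrt (by positivity)]
  simp [b.repr_apply_apply]

private lemma hs_mono {E : Type*} [NormedAddCommGroup E] [InnerProductSpace ℂ E]
    [FiniteDimensional ℂ E] {ι κ : Type*} [Fintype ι] [Fintype κ]
    (b : OrthonormalBasis ι ℂ E) {u : κ → E} (hu : Orthonormal ℂ u) (T : E →ₗ[ℂ] E) :
    ∑ i, ‖T (u i)‖ ^ 2 ≤ ∑ j, ‖T (b j)‖ ^ 2 := by
  have key : ∀ (v : E → E) (hv : ∀ x y, ⟪v x, y⟫ = ⟪x, T y⟫), True := fun _ _ => trivial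
  -- step 1: Σ_i ‖T u i‖² ≤ Σ_j ‖adjoint T (b j)‖²
  have step1 : ∑ i, ‖T (u i)‖ ^ 2 ≤ ∑ j, ‖(LinearMap.adjoint T) (b j)‖ ^ 2 := by
    calc ∑ i, ‖T (u i)‖ ^ 2 = ∑ i, ∑ j, ‖⟪b j, T (u i)⟫‖ ^ 2 := by
          simp_rw [parseval b]
      _ = ∑ j, ∑ i, ‖⟪u i, (LinearMap.adjoint T) (b j)⟫‖ ^ 2 := by
          rw [Finset.sum_comm]
          congr 1; ext j; congr 1; ext i
          rw [LinearMap.adjoint_inner_right, norm_inner_symm]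
      _ ≤ ∑ j, ‖(LinearMap.adjoint T) (b j)‖ ^ 2 :=
          Finset.sum_le_sum fun j _ => hu.sum_inner_products_le _
  -- step 2: Σ_j ‖adjoint T (b j)‖² = Σ_j ‖T (b j)‖²
  have step2 : ∑ j, ‖(LinearMap.adjoint T) (b j)‖ ^ 2 = ∑ j, ‖T (b j)‖ ^ 2 := by
    calc ∑ j, ‖(LinearMap.adjoint T) (b j)‖ ^ 2
        = ∑ j, ∑ i, ‖⟪b i, (LinearMap.adjoint T) (b j)⟫‖ ^ 2 := by simp_rw [parseval b]
      _ = ∑ i, ∑ j, ‖⟪b j, T (b i)⟫‖ ^ 2 := by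
          rw [Finset.sum_comm]
          congr 1; ext i; congr 1; ext j
          rw [LinearMap.adjoint_inner_right, norm_inner_symm]
      _ = ∑ i, ‖T (b i)‖ ^ 2 := by simp_rw [← parseval b]
  exact step2 ▸ step1

/-- Hoffman–Wielandt corollary: for an `N × N` complex matrix `M`, the squared
Frobenius norm of `M - I` is at least `N - rank M`. -/
theorem frobenius_sq_sub_one_ge_card_sub_rank (N : ℕ) (M : Matrix (Fin N) (Fin N) ℂ) :
    (N : ℝ) - (M.rank : ℝ) ≤ ∑ i, ∑ j, ‖M i j - (1 : Matrix (Fin N) (Fin N) ℂ) i j‖ ^ 2 := by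
  set A : Matrix (Fin N) (Fin N) ℂ := M - 1 with hA
  set T : EuclideanSpace ℂ (Fin N) →ₗ[ℂ] EuclideanSpace ℂ (Fin N) := Matrix.toEuclideanLin A
  set T' : EuclideanSpace ℂ (Fin N) →ₗ[ℂ] EuclideanSpace ℂ (Fin N) := Matrix.toEuclideanLin M
  set K := LinearMap.ker T'
  set k := Module.finrank ℂ K
  set e := EuclideanSpace.basisFun (Fin N) ℂ
  -- RHS equals Σ_j ‖T (e j)‖²
  have hRHS : ∑ i, ∑ j, ‖M i j - (1 : Matrix (Fin N) (Fin N) ℂ) i j‖ ^ 2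
      = ∑ j, ‖T (e j)‖ ^ 2 := by
    rw [Finset.sum_comm]
    congr 1; ext j
    have : T (e j) = (WithLp.equiv 2 (Fin N → ℂ)).symm (Matrix.mulVec A (Pi.single j 1)) := by
      rw [Matrix.toEuclideanLin_apply]
      congr 1
      rw [EuclideanSpace.basisFun_apply, PiLp.ofLp_single]
    rw [this, EuclideanSpace.norm_eq, Real.sq_sqrt (by positivity)]
    congr 1; ext i
    rw [WithLp.equiv_symm_apply, PiLp.toLp_apply, Matrix.mulVec_single]
    simp [hA, Matrix.sub_apply]
  rw [hRHS]
  -- rank-nullity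
  have hrank : M.rank = Module.finrank ℂ (LinearMap.range T') := by
    rw [Matrix.rank_eq_finrank_range_toLin M (EuclideanSpace.basisFun (Fin N) ℂ).toBasis
      (EuclideanSpace.basisFun (Fin N) ℂ).toBasis]
    rw [← Matrix.toEuclideanLin_eq_toLin_orthonormal]
  have hrn : Module.finrank ℂ (LinearMap.range T') + k = N := by
    have := LinearMap.finrank_range_add_finrank_ker T'
    rwa [finrank_euclideanSpace_fin] at this
  -- orthonormal family in the kernel
  set b := stdOrthonormalBasis ℂ K
  set u : Fin k → EuclideanSpace ℂ (Fin N) := fun i => (b i : EuclideanSpace ℂ (Fin N))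
  have hu : Orthonormal ℂ u := b.orthonormal.comp_linearIsometry K.subtypeₗᵢ
  have hTu : ∀ i, T (u i) = -(u i) := by
    intro i
    have hmem : u i ∈ K := (b i).2
    have h1 : T' (u i) = 0 := hmem
    have h2 : T = T' - LinearMap.id := by
      have : Matrix.toEuclideanLin (M - (1 : Matrix (Fin N) (Fin N) ℂ))
          = Matrix.toEuclideanLin M - Matrix.toEuclideanLin 1 := map_sub _ _ _
      rw [show T = Matrix.toEuclideanLin A from rfl, hA, this]
      congr 1
      apply LinearMap.ext
      intro v
      rw [Matrix.toEuclideanLin_apply]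
      simp [Matrix.one_mulVec]
    rw [h2]
    simp [h1]
  have hsum : ∑ i : Fin k, ‖T (u i)‖ ^ 2 = (k : ℝ) := by
    rw [Finset.sum_congr rfl fun i _ => by rw [hTu i, norm_neg, hu.1 i]]
    simp
  have := hs_mono e hu T
  rw [hsum] at this
  have hk : (N : ℝ) - (M.rank : ℝ) = (k : ℝ) := by
    rw [hrank]
    have := hrn
    push_cast [← this]
    ring
  linarith
end

section
/- For any two N×N complex matrices M and P, the sum over i of (σᵢ(M) − σᵢ(P))² is at most ‖M − P‖₂², where σ₁(A) ≥ ⋯ ≥ σ_N(A) denote the singular values of A in decreasing order and ‖·‖₂ is the Frobenius norm. -/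
open Finset Matrix

private lemma telescope_Ico (f : ℕ → ℝ) {a b : ℕ} (h : a ≤ b) :
    ∑ k ∈ Finset.Ico a b, (f k - f (k+1)) = f a - f b := by
  induction b, h using Nat.le_induction with
  | base => simp
  | succ b hb ih => rw [Finset.sum_Ico_succ_top hb, ih]; ring

private lemma hx_eq_aux {N : ℕ} (x : ℕ → ℝ) (hxN : x N = 0) {i : ℕ} (hi : i < N) :
    x i = ∑ k ∈ range N, (if i ≤ k then x k - x (k+1) else 0) := by
  rw [← Finset.sum_filter]
  have : (range N).filter (fun k => i ≤ k) = Finset.Ico i N := by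
    ext k; simp; omega
  rw [this, telescope_Ico _ hi.le, hxN, sub_zero]

private lemma abel_step {N : ℕ} (x c : ℕ → ℝ) (hxN : x N = 0) :
    ∑ i ∈ range N, x i * c i
      = ∑ k ∈ range N, (x k - x (k+1)) * ∑ i ∈ range N, (if i ≤ k then c i else 0) := by
  calc ∑ i ∈ range N, x i * c i
      = ∑ i ∈ range N, ∑ k ∈ range N, (if i ≤ k then (x k - x (k+1)) * c i else 0) := by
        refine Finset.sum_congr rfl fun i hi => ?_
        rw [hx_eq_aux x hxN (mem_range.mp hi), Finset.sum_mul]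
        exact Finset.sum_congr rfl fun k _ => by rw [ite_mul, zero_mul]
    _ = ∑ k ∈ range N, ∑ i ∈ range N, (if i ≤ k then (x k - x (k+1)) * c i else 0) :=
        Finset.sum_comm
    _ = _ := by
        refine Finset.sum_congr rfl fun k _ => ?_
        rw [Finset.mul_sum]
        exact Finset.sum_congr rfl fun i _ => by rw [mul_ite, mul_zero]

private lemma abel_key (N : ℕ) (x y : ℕ → ℝ) (s : ℕ → ℕ → ℝ)
    (hxm : ∀ ⦃i j⦄, i ≤ j → x j ≤ x i) (hxN : x N = 0)
    (hym : ∀ ⦃i j⦄, i ≤ j → y j ≤ y i) (hyN : y N = 0)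
    (hs0 : ∀ i j, 0 ≤ s i j)
    (hrow : ∀ i, ∑ j ∈ range N, s i j ≤ 1)
    (hcol : ∀ j, ∑ i ∈ range N, s i j ≤ 1) :
    ∑ i ∈ range N, ∑ j ∈ range N, x i * y j * s i j ≤ ∑ i ∈ range N, x i * y i := by
  set T : ℕ → ℕ → ℝ := fun k l => ∑ j ∈ range N, ∑ i ∈ range N,
    (if i ≤ k ∧ j ≤ l then s i j else 0) with hT
  have hdx : ∀ k, 0 ≤ x k - x (k+1) := fun k => sub_nonneg.2 (hxm (Nat.le_succ k))
  have hdy : ∀ k, 0 ≤ y k - y (k+1) := fun k => sub_nonneg.2 (hym (Nat.le_succ k))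
  -- LHS = ∑ k l, dx k * dy l * T k l
  have hLHS : ∑ i ∈ range N, ∑ j ∈ range N, x i * y j * s i j
      = ∑ k ∈ range N, ∑ l ∈ range N, (x k - x (k+1)) * (y l - y (l+1)) * T k l := by
    calc ∑ i ∈ range N, ∑ j ∈ range N, x i * y j * s i j
        = ∑ i ∈ range N, x i * ∑ j ∈ range N, y j * s i j := by
          refine Finset.sum_congr rfl fun i _ => ?_
          rw [Finset.mul_sum]
          exact Finset.sum_congr rfl fun j _ => (mul_assoc _ _ _)
      _ = ∑ k ∈ range N, (x k - x (k+1)) *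
            ∑ i ∈ range N, (if i ≤ k then ∑ j ∈ range N, y j * s i j else 0) :=
          abel_step x _ hxN
      _ = ∑ k ∈ range N, (x k - x (k+1)) *
            ∑ j ∈ range N, y j * ∑ i ∈ range N, (if i ≤ k then s i j else 0) := by
          refine Finset.sum_congr rfl fun k _ => ?_
          congr 1
          calc ∑ i ∈ range N, (if i ≤ k then ∑ j ∈ range N, y j * s i j else 0)
              = ∑ i ∈ range N, ∑ j ∈ range N, y j * (if i ≤ k then s i j else 0) := by
                refine Finset.sum_congr rfl fun i _ => ?_
                by_cases h : i ≤ k <;> simp [h]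
            _ = ∑ j ∈ range N, ∑ i ∈ range N, y j * (if i ≤ k then s i j else 0) :=
                Finset.sum_comm
            _ = _ := by
                refine Finset.sum_congr rfl fun j _ => ?_
                rw [Finset.mul_sum]
      _ = _ := by
          refine Finset.sum_congr rfl fun k _ => ?_
          rw [abel_step y (fun j => ∑ i ∈ range N, (if i ≤ k then s i j else 0)) hyN,
            Finset.mul_sum]
          refine Finset.sum_congr rfl fun l _ => ?_
          rw [hT]
          have : ∑ j ∈ range N, (if j ≤ l then ∑ i ∈ range N, (if i ≤ k then s i j else 0) else 0)
              = ∑ j ∈ range N, ∑ i ∈ range N, (if i ≤ k ∧ j ≤ l then s i j else 0) := by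
            refine Finset.sum_congr rfl fun j _ => ?_
            by_cases h : j ≤ l
            · simp only [h, if_true, and_true]
            · simp [h]
          rw [this]; ring
  rw [hLHS]
  -- T k l ≤ Kmin k l
  have hTbound : ∀ k l, T k l ≤ ∑ i ∈ range N, (if i ≤ k ∧ i ≤ l then (1:ℝ) else 0) := by
    intro k l
    rcases le_total l k with hlk | hkl
    · calc T k l ≤ ∑ j ∈ range N, (if j ≤ l then (1:ℝ) else 0) := by
            refine Finset.sum_le_sum fun j _ => ?_
            by_cases hj : j ≤ l
            · simp only [hj, if_true, and_true]
              calc ∑ i ∈ range N, (if i ≤ k then s i j else 0)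
                  ≤ ∑ i ∈ range N, s i j :=
                    Finset.sum_le_sum fun i _ => by
                      by_cases h : i ≤ k <;> simp [h, hs0]
                _ ≤ 1 := hcol j
            · simp [hj, and_false]
        _ = _ := by
            refine (Finset.sum_congr rfl fun i _ => ?_).symm
            by_cases h : i ≤ l
            · simp [h, le_trans h hlk]
            · simp [h]
    · calc T k l = ∑ i ∈ range N, ∑ j ∈ range N, (if i ≤ k ∧ j ≤ l then s i j else 0) :=
            Finset.sum_comm
        _ ≤ ∑ i ∈ range N, (if i ≤ k then (1:ℝ) else 0) := by
            refine Finset.sum_le_sum fun i _ => ?_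
            by_cases hi : i ≤ k
            · simp only [hi, true_and, if_true]
              calc ∑ j ∈ range N, (if j ≤ l then s i j else 0)
                  ≤ ∑ j ∈ range N, s i j :=
                    Finset.sum_le_sum fun j _ => by
                      by_cases h : j ≤ l <;> simp [h, hs0]
                _ ≤ 1 := hrow i
            · simp [hi]
        _ = _ := by
            refine (Finset.sum_congr rfl fun i _ => ?_).symm
            by_cases h : i ≤ k
            · simp [h, le_trans h hkl]
            · simp [h]
  calc ∑ k ∈ range N, ∑ l ∈ range N, (x k - x (k+1)) * (y l - y (l+1)) * T k l
      ≤ ∑ k ∈ range N, ∑ l ∈ range N, (x k - x (k+1)) * (y l - y (l+1)) *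
          ∑ i ∈ range N, (if i ≤ k ∧ i ≤ l then (1:ℝ) else 0) :=
        Finset.sum_le_sum fun k _ => Finset.sum_le_sum fun l _ =>
          mul_le_mul_of_nonneg_left (hTbound k l) (mul_nonneg (hdx k) (hdy l))
    _ = ∑ i ∈ range N, x i * y i := by
        calc ∑ k ∈ range N, ∑ l ∈ range N, (x k - x (k+1)) * (y l - y (l+1)) *
              ∑ i ∈ range N, (if i ≤ k ∧ i ≤ l then (1:ℝ) else 0)
            = ∑ k ∈ range N, ∑ i ∈ range N, ∑ l ∈ range N,
                (if i ≤ k ∧ i ≤ l then (x k - x (k+1)) * (y l - y (l+1)) else 0) := by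
              refine Finset.sum_congr rfl fun k _ => ?_
              rw [Finset.sum_comm]
              refine Finset.sum_congr rfl fun l _ => ?_
              rw [Finset.mul_sum]
              refine Finset.sum_congr rfl fun i _ => ?_
              by_cases h : i ≤ k ∧ i ≤ l <;> simp [h]
          _ = ∑ i ∈ range N, ∑ k ∈ range N, ∑ l ∈ range N,
                (if i ≤ k ∧ i ≤ l then (x k - x (k+1)) * (y l - y (l+1)) else 0) :=
              Finset.sum_comm
          _ = ∑ i ∈ range N, x i * y i := by
              refine Finset.sum_congr rfl fun i hi => ?_
              rw [hx_eq_aux x hxN (mem_range.mp hi), hx_eq_aux y hyN (mem_range.mp hi),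
                Finset.sum_mul_sum]
              refine Finset.sum_congr rfl fun k _ => Finset.sum_congr rfl fun l _ => ?_
              rw [ite_zero_mul_ite_zero]


private lemma range_dite_sum {N : ℕ} (g : Fin N → ℝ) :
    ∑ n ∈ Finset.range N, (if h : n < N then g ⟨n, h⟩ else 0) = ∑ i, g i := by
  rw [← Fin.sum_univ_eq_sum_range (fun n => if h : n < N then g ⟨n, h⟩ else 0) N]
  exact Finset.sum_congr rfl fun i _ => by simp [i.isLt]

variable {E : Type*} [NormedAddCommGroup E] [InnerProductSpace ℂ E]

private lemma normalize_orth {ι : Type*} (b : ι → E) :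
    ∃ a : ι → E, (∀ i, b i = (‖b i‖ : ℂ) • a i) ∧
      (∀ i, ‖a i‖ = 1 ∨ a i = 0) ∧
      (∀ i j, inner ℂ (b i) (b j) = (0:ℂ) → inner ℂ (a i) (a j) = (0:ℂ)) := by
  refine ⟨fun i => (‖b i‖ : ℂ)⁻¹ • b i, fun i => ?_, fun i => ?_, fun i j h => ?_⟩
  · rcases eq_or_ne (b i) 0 with h | h
    · simp [h]
    · rw [smul_smul, mul_inv_cancel₀ (by exact_mod_cast norm_ne_zero_iff.mpr h), one_smul]
  · rcases eq_or_ne (b i) 0 with h | h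
    · right; simp [h]
    · left
      rw [norm_smul]
      simp [norm_ne_zero_iff.mpr h]
  · rw [inner_smul_left, inner_smul_right, h]
    ring

private lemma bessel_orth {ι : Type*} [Fintype ι] (a : ι → E)
    (horth : ∀ i j, i ≠ j → inner ℂ (a i) (a j) = (0:ℂ))
    (hnorm : ∀ i, ‖a i‖ = 1 ∨ a i = 0) (x : E) :
    ∑ i, ‖(inner ℂ (a i) x : ℂ)‖ ^ 2 ≤ ‖x‖ ^ 2 := by
  classical
  have hON : Orthonormal ℂ (fun i : {i // a i ≠ 0} => a i) := by
    constructor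
    · intro i; exact (hnorm i).resolve_right i.2
    · intro i j hij
      exact horth i j (fun h => hij (Subtype.ext h))
  have hb := hON.sum_inner_products_le x (s := Finset.univ)
  calc ∑ i, ‖(inner ℂ (a i) x : ℂ)‖ ^ 2
      = ∑ i ∈ Finset.univ.filter (fun i => a i ≠ 0), ‖(inner ℂ (a i) x : ℂ)‖ ^ 2 := by
        refine (Finset.sum_filter_of_ne fun i _ h => ?_).symm
        intro ha
        exact h (by simp [ha])
    _ = ∑ i : {i // a i ≠ 0}, ‖(inner ℂ (a i.1) x : ℂ)‖ ^ 2 :=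
        Finset.sum_subtype _ (fun i => by simp) _
    _ ≤ ‖x‖ ^ 2 := hb

private lemma row_inner {N : ℕ} (B C : Matrix (Fin N) (Fin N) ℂ) (i j : Fin N) :
    (inner ℂ ((WithLp.equiv 2 (Fin N → ℂ)).symm (C j))
      ((WithLp.equiv 2 (Fin N → ℂ)).symm (B i)) : ℂ) = (B * Cᴴ) i j := by
  rw [Matrix.mul_apply, PiLp.inner_apply]
  refine Finset.sum_congr rfl fun k _ => ?_
  simp [Matrix.conjTranspose_apply, RCLike.inner_apply, mul_comm]

private lemma decomp {N : ℕ} (M : Matrix (Fin N) (Fin N) ℂ) :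
    ∃ U B : Matrix (Fin N) (Fin N) ℂ, U ∈ Matrix.unitaryGroup (Fin N) ℂ ∧
      M = U * B ∧
      B * Bᴴ = Matrix.diagonal (fun i =>
        ((Matrix.isHermitian_mul_conjTranspose_self M).eigenvalues i : ℂ)) := by
  set hH := Matrix.isHermitian_mul_conjTranspose_self M with hhH
  set U : Matrix (Fin N) (Fin N) ℂ := (hH.eigenvectorUnitary : Matrix (Fin N) (Fin N) ℂ) with hUdef
  have hU : U ∈ Matrix.unitaryGroup (Fin N) ℂ := hH.eigenvectorUnitary.2
  have hUU : U * Uᴴ = 1 := by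
    rw [← Matrix.star_eq_conjTranspose]
    exact (Unitary.mem_iff.mp hU).2
  refine ⟨U, Uᴴ * M, hU, ?_, ?_⟩
  · rw [← Matrix.mul_assoc, hUU, Matrix.one_mul]
  · have hdiag := hH.conjStarAlgAut_star_eigenvectorUnitary
    rw [Unitary.conjStarAlgAut_star_apply, Matrix.star_eq_conjTranspose] at hdiag
    calc (Uᴴ * M) * (Uᴴ * M)ᴴ = Uᴴ * (M * Mᴴ) * U := by
          rw [Matrix.conjTranspose_mul, Matrix.conjTranspose_conjTranspose]
          simp only [Matrix.mul_assoc]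
      _ = _ := by rw [hdiag]; rfl

private lemma vonNeumann (N : ℕ) (M P : Matrix (Fin N) (Fin N) ℂ)
    (σM σP : Fin N → ℝ) (hM : Antitone σM) (hP : Antitone σP)
    (hMe : ∃ e : Equiv.Perm (Fin N), ∀ i,
      σM i = Real.sqrt ((Matrix.isHermitian_mul_conjTranspose_self M).eigenvalues (e i)))
    (hPe : ∃ e : Equiv.Perm (Fin N), ∀ i,
      σP i = Real.sqrt ((Matrix.isHermitian_mul_conjTranspose_self P).eigenvalues (e i))) :
    (Matrix.trace (M * Pᴴ)).re ≤ ∑ i, σM i * σP i := by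
  classical
  obtain ⟨U, B, hU, hMU, hBB⟩ := decomp M
  obtain ⟨W, C, hW, hPW, hCC⟩ := decomp P
  obtain ⟨e, he⟩ := hMe
  obtain ⟨f, hf⟩ := hPe
  set lM := (Matrix.isHermitian_mul_conjTranspose_self M).eigenvalues with hlM
  set lP := (Matrix.isHermitian_mul_conjTranspose_self P).eigenvalues with hlP
  set sM : Fin N → ℝ := fun i => Real.sqrt (lM i) with hsM
  set sP : Fin N → ℝ := fun i => Real.sqrt (lP i) with hsP
  set bR : Fin N → EuclideanSpace ℂ (Fin N) :=
    fun i => (WithLp.equiv 2 (Fin N → ℂ)).symm (B i) with hbR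
  set cR : Fin N → EuclideanSpace ℂ (Fin N) :=
    fun i => (WithLp.equiv 2 (Fin N → ℂ)).symm (C i) with hcR
  have hbI : ∀ i j, (inner ℂ (bR j) (bR i) : ℂ) = if i = j then (lM i : ℂ) else 0 := by
    intro i j
    rw [hbR, row_inner, hBB]
    simp [Matrix.diagonal_apply]
  have hcI : ∀ i j, (inner ℂ (cR j) (cR i) : ℂ) = if i = j then (lP i : ℂ) else 0 := by
    intro i j
    rw [hcR, row_inner, hCC]
    simp [Matrix.diagonal_apply]
  have hbn : ∀ i, ‖bR i‖ = sM i := by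
    intro i
    rw [@norm_eq_sqrt_re_inner ℂ, hbI i i, if_pos rfl]
    simp [hsM]
  have hcn : ∀ i, ‖cR i‖ = sP i := by
    intro i
    rw [@norm_eq_sqrt_re_inner ℂ, hcI i i, if_pos rfl]
    simp [hsP]
  obtain ⟨aM, haM1, haM2, haM3⟩ := normalize_orth bR
  obtain ⟨aP, haP1, haP2, haP3⟩ := normalize_orth cR
  have haMorth : ∀ i j, i ≠ j → (inner ℂ (aM i) (aM j) : ℂ) = 0 := by
    intro i j hij
    refine haM3 i j ?_
    rw [hbI j i, if_neg (Ne.symm hij)]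
  have haPorth : ∀ i j, i ≠ j → (inner ℂ (aP i) (aP j) : ℂ) = 0 := by
    intro i j hij
    refine haP3 i j ?_
    rw [hcI j i, if_neg (Ne.symm hij)]
  have haMle : ∀ i, ‖aM i‖ ≤ 1 := by
    intro i; rcases haM2 i with h | h <;> simp [h]
  have haPle : ∀ i, ‖aP i‖ ≤ 1 := by
    intro i; rcases haP2 i with h | h <;> simp [h]
  have hsM0 : ∀ i, 0 ≤ sM i := fun i => Real.sqrt_nonneg _
  have hsP0 : ∀ i, 0 ≤ sP i := fun i => Real.sqrt_nonneg _
  -- entry formula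
  have hBC : ∀ i j, (B * Cᴴ) i j = (sM i : ℂ) * (sP j : ℂ) * inner ℂ (aP j) (aM i) := by
    intro i j
    rw [← row_inner B C i j]
    show (inner ℂ (cR j) (bR i) : ℂ) = _
    rw [haM1 i, haP1 j, inner_smul_left, inner_smul_right, hbn, hcn]
    simp only [Complex.conj_ofReal]
    ring
  -- the unitary Q
  set Q : Matrix (Fin N) (Fin N) ℂ := Wᴴ * U with hQdef
  have hUU' : Uᴴ * U = 1 := by
    rw [← Matrix.star_eq_conjTranspose]; exact (Unitary.mem_iff.mp hU).1
  have hUU : U * Uᴴ = 1 := by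
    rw [← Matrix.star_eq_conjTranspose]; exact (Unitary.mem_iff.mp hU).2
  have hWW' : Wᴴ * W = 1 := by
    rw [← Matrix.star_eq_conjTranspose]; exact (Unitary.mem_iff.mp hW).1
  have hWW : W * Wᴴ = 1 := by
    rw [← Matrix.star_eq_conjTranspose]; exact (Unitary.mem_iff.mp hW).2
  have hQ1 : Qᴴ * Q = 1 := by
    have h : Qᴴ * Q = Uᴴ * (W * Wᴴ) * U := by
      rw [hQdef, Matrix.conjTranspose_mul, Matrix.conjTranspose_conjTranspose]
      simp only [Matrix.mul_assoc]
    rw [h, hWW, Matrix.mul_one, hUU']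
  have hQ2 : Q * Qᴴ = 1 := by
    have h : Q * Qᴴ = Wᴴ * (U * Uᴴ) * W := by
      rw [hQdef, Matrix.conjTranspose_mul, Matrix.conjTranspose_conjTranspose]
      simp only [Matrix.mul_assoc]
    rw [h, hUU, Matrix.mul_one, hWW']
  have hnormsq : ∀ z : ℂ, star z * z = ((‖z‖^2 : ℝ) : ℂ) := by
    intro z
    rw [Complex.star_def, mul_comm, Complex.mul_conj]
    norm_cast
    rw [Complex.normSq_eq_norm_sq]
  have hQcol : ∀ i, ∑ j, ‖Q j i‖^2 = 1 := by
    intro i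
    have h := congrArg (fun X => X i i) hQ1
    simp only [Matrix.mul_apply, Matrix.conjTranspose_apply, Matrix.one_apply_eq] at h
    rw [Finset.sum_congr rfl (fun j _ => hnormsq (Q j i)), ← Complex.ofReal_sum] at h
    exact_mod_cast h
  have hQrow : ∀ i, ∑ j, ‖Q i j‖^2 = 1 := by
    intro i
    have h := congrArg (fun X => X i i) hQ2
    simp only [Matrix.mul_apply, Matrix.conjTranspose_apply, Matrix.one_apply_eq] at h
    have h' : ∀ j, Q i j * star (Q i j) = ((‖Q i j‖^2 : ℝ) : ℂ) := fun j => by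
      rw [mul_comm]; exact hnormsq _
    rw [Finset.sum_congr rfl (fun j _ => h' j), ← Complex.ofReal_sum] at h
    exact_mod_cast h
  -- trace formula
  have htr : Matrix.trace (M * Pᴴ) = ∑ i, ∑ j, (B * Cᴴ) i j * Q j i := by
    rw [hMU, hPW]
    have h1 : (U * B) * (W * C)ᴴ = U * ((B * Cᴴ) * Wᴴ) := by
      rw [Matrix.conjTranspose_mul]
      simp only [Matrix.mul_assoc]
    rw [h1, Matrix.trace_mul_comm, Matrix.mul_assoc, ← hQdef]
    simp only [Matrix.trace, Matrix.diag, Matrix.mul_apply]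
  -- the substochastic matrix
  set s0 : Fin N → Fin N → ℝ :=
    fun i j => (‖(inner ℂ (aP j) (aM i) : ℂ)‖^2 + ‖Q j i‖^2)/2 with hs0def
  have hs00 : ∀ i j, 0 ≤ s0 i j := by
    intro i j; rw [hs0def]; positivity
  have hrow0 : ∀ i, ∑ j, s0 i j ≤ 1 := by
    intro i
    have h1 : ∑ j, ‖(inner ℂ (aP j) (aM i) : ℂ)‖^2 ≤ 1 := by
      refine le_trans (bessel_orth aP haPorth haP2 (aM i)) ?_
      calc ‖aM i‖^2 ≤ 1^2 := by
            exact pow_le_pow_left₀ (norm_nonneg _) (haMle i) 2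
        _ = 1 := one_pow 2
    have h2 := hQcol i
    rw [hs0def]
    simp only
    rw [← Finset.sum_div, Finset.sum_add_distrib]
    linarith
  have hcol0 : ∀ j, ∑ i, s0 i j ≤ 1 := by
    intro j
    have h1 : ∑ i, ‖(inner ℂ (aP j) (aM i) : ℂ)‖^2 ≤ 1 := by
      have heq : ∀ i, ‖(inner ℂ (aP j) (aM i) : ℂ)‖^2 = ‖(inner ℂ (aM i) (aP j) : ℂ)‖^2 :=
        fun i => by rw [norm_inner_symm]
      rw [Finset.sum_congr rfl fun i _ => heq i]
      refine le_trans (bessel_orth aM haMorth haM2 (aP j)) ?_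
      calc ‖aP j‖^2 ≤ 1^2 := by
            exact pow_le_pow_left₀ (norm_nonneg _) (haPle j) 2
        _ = 1 := one_pow 2
    have h2 := hQrow j
    rw [hs0def]
    simp only
    rw [← Finset.sum_div, Finset.sum_add_distrib]
    linarith
  -- main bound: re trace ≤ weighted sum
  have hbound : (Matrix.trace (M * Pᴴ)).re ≤ ∑ i, ∑ j, sM i * sP j * s0 i j := by
    rw [htr]
    calc (∑ i, ∑ j, (B * Cᴴ) i j * Q j i).re
        = ∑ i, ∑ j, ((B * Cᴴ) i j * Q j i).re := by
          rw [Complex.re_sum]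
          exact Finset.sum_congr rfl fun i _ => Complex.re_sum _ _
      _ ≤ ∑ i, ∑ j, sM i * sP j * s0 i j := by
          refine Finset.sum_le_sum fun i _ => Finset.sum_le_sum fun j _ => ?_
          calc ((B * Cᴴ) i j * Q j i).re ≤ ‖(B * Cᴴ) i j * Q j i‖ := Complex.re_le_norm _
            _ = sM i * sP j * (‖(inner ℂ (aP j) (aM i) : ℂ)‖ * ‖Q j i‖) := by
                rw [norm_mul, hBC]
                simp only [norm_mul, Complex.norm_real,
                  Real.norm_eq_abs, abs_of_nonneg (hsM0 i), abs_of_nonneg (hsP0 j)]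
                ring
            _ ≤ sM i * sP j * s0 i j := by
                refine mul_le_mul_of_nonneg_left ?_ (mul_nonneg (hsM0 i) (hsP0 j))
                rw [hs0def]
                nlinarith [sq_nonneg (‖(inner ℂ (aP j) (aM i) : ℂ)‖ - ‖Q j i‖)]
  refine le_trans hbound ?_
  -- reindex by the permutations and conclude with abel_key
  have hσM0 : ∀ i, 0 ≤ σM i := fun i => (he i) ▸ Real.sqrt_nonneg _
  have hσP0 : ∀ i, 0 ≤ σP i := fun i => (hf i) ▸ Real.sqrt_nonneg _
  have hre : ∑ i, ∑ j, sM i * sP j * s0 i j = ∑ i, ∑ j, σM i * σP j * s0 (e i) (f j) := by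
    rw [← Equiv.sum_comp e (fun i => ∑ j, sM i * sP j * s0 i j)]
    refine Finset.sum_congr rfl fun i _ => ?_
    rw [← Equiv.sum_comp f (fun j => sM (e i) * sP j * s0 (e i) j)]
    refine Finset.sum_congr rfl fun j _ => ?_
    rw [he i, hf j]
  rw [hre]
  set x : ℕ → ℝ := fun n => if h : n < N then σM ⟨n, h⟩ else 0 with hx
  set y : ℕ → ℝ := fun n => if h : n < N then σP ⟨n, h⟩ else 0 with hy
  set s : ℕ → ℕ → ℝ := fun m n =>
    if h : m < N ∧ n < N then s0 (e ⟨m, h.1⟩) (f ⟨n, h.2⟩) else 0 with hs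
  have h1 : ∑ i, ∑ j, σM i * σP j * s0 (e i) (f j)
      = ∑ m ∈ Finset.range N, ∑ n ∈ Finset.range N, x m * y n * s m n := by
    rw [← range_dite_sum (fun i : Fin N => ∑ j, σM i * σP j * s0 (e i) (f j))]
    refine Finset.sum_congr rfl fun m hm => ?_
    have hmN : m < N := Finset.mem_range.mp hm
    rw [dif_pos hmN, ← range_dite_sum (fun j : Fin N => σM ⟨m, hmN⟩ * σP j * s0 (e ⟨m, hmN⟩) (f j))]
    refine Finset.sum_congr rfl fun n hn => ?_
    have hnN : n < N := Finset.mem_range.mp hn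
    rw [dif_pos hnN, hx, hy, hs]
    simp only [dif_pos hmN, dif_pos hnN, dif_pos (And.intro hmN hnN)]
  rw [h1]
  have h2 : ∑ i, σM i * σP i = ∑ m ∈ Finset.range N, x m * y m := by
    rw [← range_dite_sum (fun i : Fin N => σM i * σP i)]
    refine Finset.sum_congr rfl fun m hm => ?_
    have hmN : m < N := Finset.mem_range.mp hm
    rw [dif_pos hmN, hx, hy]
    simp only [dif_pos hmN]
  rw [h2]
  refine abel_key N x y s ?_ ?_ ?_ ?_ ?_ ?_ ?_
  · intro i j hij
    rw [hx]
    by_cases hj : j < N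
    · have hi : i < N := lt_of_le_of_lt hij hj
      simp only [dif_pos hi, dif_pos hj]
      exact hM (show (⟨i, hi⟩ : Fin N) ≤ ⟨j, hj⟩ from hij)
    · simp only [dif_neg hj]
      by_cases hi : i < N
      · simp only [dif_pos hi]; exact hσM0 _
      · simp only [dif_neg hi]; exact le_refl 0
  · rw [hx]; simp
  · intro i j hij
    rw [hy]
    by_cases hj : j < N
    · have hi : i < N := lt_of_le_of_lt hij hj
      simp only [dif_pos hi, dif_pos hj]
      exact hP (show (⟨i, hi⟩ : Fin N) ≤ ⟨j, hj⟩ from hij)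
    · simp only [dif_neg hj]
      by_cases hi : i < N
      · simp only [dif_pos hi]; exact hσP0 _
      · simp only [dif_neg hi]; exact le_refl 0
  · rw [hy]; simp
  · intro m n
    rw [hs]
    by_cases h : m < N ∧ n < N
    · simp only [dif_pos h]; exact hs00 _ _
    · simp only [dif_neg h]; exact le_refl 0
  · intro m
    by_cases hm : m < N
    · have heq : ∑ n ∈ Finset.range N, s m n
          = ∑ n ∈ Finset.range N, (if h : n < N then
              (fun j : Fin N => s0 (e ⟨m, hm⟩) (f j)) ⟨n, h⟩ else 0) := by
        refine Finset.sum_congr rfl fun n hn => ?_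
        have hnN : n < N := Finset.mem_range.mp hn
        rw [hs]
        simp only [dif_pos (And.intro hm hnN), dif_pos hnN]
      rw [heq, range_dite_sum (fun j : Fin N => s0 (e ⟨m, hm⟩) (f j)),
        Equiv.sum_comp f (fun j => s0 (e ⟨m, hm⟩) j)]
      exact hrow0 _
    · have heq : ∑ n ∈ Finset.range N, s m n = 0 := by
        refine Finset.sum_eq_zero fun n _ => ?_
        rw [hs]
        simp only [dif_neg (fun h : m < N ∧ n < N => hm h.1)]
      rw [heq]; exact zero_le_one
  · intro n
    by_cases hn : n < N
    · have heq : ∑ m ∈ Finset.range N, s m n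
          = ∑ m ∈ Finset.range N, (if h : m < N then
              (fun i : Fin N => s0 (e i) (f ⟨n, hn⟩)) ⟨m, h⟩ else 0) := by
        refine Finset.sum_congr rfl fun m hm => ?_
        have hmN : m < N := Finset.mem_range.mp hm
        rw [hs]
        simp only [dif_pos (And.intro hmN hn), dif_pos hmN]
      rw [heq, range_dite_sum (fun i : Fin N => s0 (e i) (f ⟨n, hn⟩)),
        Equiv.sum_comp e (fun i => s0 i (f ⟨n, hn⟩))]
      exact hcol0 _
    · have heq : ∑ m ∈ Finset.range N, s m n = 0 := by
        refine Finset.sum_eq_zero fun m _ => ?_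
        rw [hs]
        simp only [dif_neg (fun h : m < N ∧ n < N => hn h.2)]
      rw [heq]; exact zero_le_one

private lemma trace_mul_conjTranspose_self {N : ℕ} (X : Matrix (Fin N) (Fin N) ℂ) :
    Matrix.trace (X * Xᴴ) = ((∑ i, ∑ j, ‖X i j‖^2 : ℝ) : ℂ) := by
  simp only [Matrix.trace, Matrix.diag, Matrix.mul_apply, Matrix.conjTranspose_apply]
  rw [Complex.ofReal_sum]
  refine Finset.sum_congr rfl fun i _ => ?_
  rw [Complex.ofReal_sum]
  refine Finset.sum_congr rfl fun j _ => ?_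
  rw [Complex.star_def, Complex.mul_conj]
  norm_cast
  rw [Complex.normSq_eq_norm_sq]

private lemma sum_eigs_eq_frobenius {N : ℕ} (M : Matrix (Fin N) (Fin N) ℂ) :
    ∑ i, (Matrix.isHermitian_mul_conjTranspose_self M).eigenvalues i
      = ∑ i, ∑ j, ‖M i j‖^2 := by
  obtain ⟨U, B, hU, hMU, hBB⟩ := decomp M
  have hUU' : Uᴴ * U = 1 := by
    rw [← Matrix.star_eq_conjTranspose]; exact (Unitary.mem_iff.mp hU).1
  have h1 : Matrix.trace (B * Bᴴ)
      = ((∑ i, (Matrix.isHermitian_mul_conjTranspose_self M).eigenvalues i : ℝ) : ℂ) := by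
    rw [hBB, Matrix.trace_diagonal, Complex.ofReal_sum]
  have h3 : Matrix.trace (M * Mᴴ) = Matrix.trace (B * Bᴴ) := by
    rw [hMU]
    have h : (U * B) * (U * B)ᴴ = U * ((B * Bᴴ) * Uᴴ) := by
      rw [Matrix.conjTranspose_mul]
      simp only [Matrix.mul_assoc]
    rw [h, Matrix.trace_mul_comm, Matrix.mul_assoc, hUU', Matrix.mul_one]
  have h2 := trace_mul_conjTranspose_self M
  rw [h3, h1] at h2
  exact_mod_cast h2

/-- Hoffman–Wielandt inequality for singular values: if `σM` and `σP` are the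
singular values of `M` and `P` (square roots of the eigenvalues of `M * Mᴴ`,
resp. `P * Pᴴ`) listed in decreasing order, then
`∑ i (σM i - σP i)² ≤ ‖M - P‖₂²` (squared Frobenius norm). -/
theorem hoffman_wielandt_singular_values (N : ℕ) (M P : Matrix (Fin N) (Fin N) ℂ)
    (σM σP : Fin N → ℝ) (hM : Antitone σM) (hP : Antitone σP)
    (hMe : ∃ e : Equiv.Perm (Fin N), ∀ i,
      σM i = Real.sqrt ((Matrix.isHermitian_mul_conjTranspose_self M).eigenvalues (e i)))
    (hPe : ∃ e : Equiv.Perm (Fin N), ∀ i,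
      σP i = Real.sqrt ((Matrix.isHermitian_mul_conjTranspose_self P).eigenvalues (e i))) :
    ∑ i, (σM i - σP i) ^ 2 ≤ ∑ i, ∑ j, ‖M i j - P i j‖ ^ 2 := by
  have hvn := vonNeumann N M P σM σP hM hP hMe hPe
  have hσM2 : ∑ i, σM i ^ 2 = ∑ i, ∑ j, ‖M i j‖^2 := by
    obtain ⟨e, he⟩ := hMe
    calc ∑ i, σM i ^ 2
        = ∑ i, (Matrix.isHermitian_mul_conjTranspose_self M).eigenvalues (e i) := by
          refine Finset.sum_congr rfl fun i _ => ?_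
          rw [he i, Real.sq_sqrt (Matrix.eigenvalues_self_mul_conjTranspose_nonneg M (e i))]
      _ = ∑ i, (Matrix.isHermitian_mul_conjTranspose_self M).eigenvalues i :=
          Equiv.sum_comp e _
      _ = _ := sum_eigs_eq_frobenius M
  have hσP2 : ∑ i, σP i ^ 2 = ∑ i, ∑ j, ‖P i j‖^2 := by
    obtain ⟨e, he⟩ := hPe
    calc ∑ i, σP i ^ 2
        = ∑ i, (Matrix.isHermitian_mul_conjTranspose_self P).eigenvalues (e i) := by
          refine Finset.sum_congr rfl fun i _ => ?_
          rw [he i, Real.sq_sqrt (Matrix.eigenvalues_self_mul_conjTranspose_nonneg P (e i))]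
      _ = ∑ i, (Matrix.isHermitian_mul_conjTranspose_self P).eigenvalues i :=
          Equiv.sum_comp e _
      _ = _ := sum_eigs_eq_frobenius P
  have hn : ∀ z : ℂ, ‖z‖^2 = Complex.normSq z := fun z => by
    rw [Complex.sq_norm]
  have htr2 : (Matrix.trace (M * Pᴴ)).re
      = ∑ i, ∑ j, (M i j * (starRingEnd ℂ) (P i j)).re := by
    simp only [Matrix.trace, Matrix.diag, Matrix.mul_apply, Matrix.conjTranspose_apply,
      Complex.star_def]
    rw [Complex.re_sum]
    exact Finset.sum_congr rfl fun i _ => Complex.re_sum _ _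
  have hRHS : ∑ i, ∑ j, ‖M i j - P i j‖ ^ 2
      = ∑ i, ∑ j, ‖M i j‖^2 + ∑ i, ∑ j, ‖P i j‖^2 - 2 * (Matrix.trace (M * Pᴴ)).re := by
    have hentry : ∀ (a b : ℂ), ‖a - b‖^2
        = ‖a‖^2 + ‖b‖^2 - 2 * (a * (starRingEnd ℂ) b).re := by
      intro a b
      rw [hn, hn, hn, Complex.normSq_sub]
    calc ∑ i, ∑ j, ‖M i j - P i j‖ ^ 2
        = ∑ i, ∑ j, (‖M i j‖^2 + ‖P i j‖^2 - 2 * (M i j * (starRingEnd ℂ) (P i j)).re) :=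
          Finset.sum_congr rfl fun i _ => Finset.sum_congr rfl fun j _ => hentry _ _
      _ = _ := by
          rw [htr2]
          simp only [Finset.sum_sub_distrib, Finset.sum_add_distrib, ← Finset.mul_sum]
  have expand : ∑ i, (σM i - σP i)^2
      = ∑ i, σM i^2 + ∑ i, σP i^2 - 2 * ∑ i, σM i * σP i := by
    have h : ∀ i, (σM i - σP i)^2 = σM i^2 + σP i^2 - 2*(σM i * σP i) := fun i => by ring
    rw [Finset.sum_congr rfl fun i _ => h i, Finset.sum_sub_distrib, Finset.sum_add_distrib,
      ← Finset.mul_sum]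
  rw [expand, hRHS]
  linarith [hvn, hσM2, hσP2]
end
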